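/- Let 1 ≤ p < ∞. If X has the p-Gelfand-Phillips property and Y has the Gelfand-Phillips property, then the injective tensor product X ⊗_ε Y has the p-Gelfand-Phillips property. -/

import Mathlib

open Filter Topology Metric NormedSpace Bornology ENNReal

noncomputable section

namespace NormedSpace
/-- The topological dual of a seminormed space `E`, as `NormedSpace.Dual` was defined in the
older Mathlib (now `StrongDual`, with different instance arguments). -/
abbrev Dual (𝕜 : Type*) [NontriviallyNormedField 𝕜] (E : Type*) [SeminormedAddCommGroup E]
    [NormedSpace 𝕜 E] : Type _ :=
  E →L[𝕜] 𝕜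
instance (𝕜 : Type*) [NontriviallyNormedField 𝕜] (E : Type*) [SeminormedAddCommGroup E]
    [NormedSpace 𝕜 E] : NormedSpace 𝕜 (Dual 𝕜 E) := inferInstance
instance (𝕜 : Type*) [NontriviallyNormedField 𝕜] (E : Type*) [SeminormedAddCommGroup E]
    [NormedSpace 𝕜 E] : SeminormedAddCommGroup (Dual 𝕜 E) := inferInstance
end NormedSpace

section Defs
variable {X Y : Type*} [NormedAddCommGroup X] [NormedSpace ℝ X]
  [NormedAddCommGroup Y] [NormedSpace ℝ Y]

/-- A sequence `x` in `X` is weakly `p`-summable if `(f (x n))ₙ ∈ ℓ_p` for every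
continuous linear functional `f`. -/
def WeaklyPSummable (p : ℝ≥0∞) (x : ℕ → X) : Prop :=
  ∀ f : Dual ℝ X, Memℓp (fun n => f (x n)) p

/-- A sequence is norm null if its norms tend to `0`. -/
def NormNull (x : ℕ → X) : Prop :=
  Tendsto (fun n => ‖x n‖) atTop (𝓝 0)

/-- An operator is `p`-convergent if it maps weakly `p`-summable sequences to norm
null sequences. -/
def PConvergent (p : ℝ≥0∞) (T : X →L[ℝ] Y) : Prop :=
  ∀ x : ℕ → X, WeaklyPSummable p x → NormNull fun n => T (x n)

/-- The adjoint (dual) operator `T* : Y* → X*`, `g ↦ g ∘ T`. -/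
def adjOp (T : X →L[ℝ] Y) : Dual ℝ Y →L[ℝ] Dual ℝ X :=
  (ContinuousLinearMap.compL ℝ X Y ℝ).flip T

/-- Weak convergence of a sequence to a point. -/
def WeaklyConvTo (x : ℕ → X) (a : X) : Prop :=
  ∀ f : Dual ℝ X, Tendsto (fun n => f (x n)) atTop (𝓝 (f a))

/-- A sequence is weakly Cauchy if `(f (x n))` converges for every functional `f`. -/
def WeaklyCauchySeq (x : ℕ → X) : Prop :=
  ∀ f : Dual ℝ X, ∃ l : ℝ, Tendsto (fun n => f (x n)) atTop (𝓝 l)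

/-- A set is relatively weakly compact iff every sequence in it has a subsequence
weakly convergent to a point of the space (sequential form, by Eberlein–Šmulian). -/
def RelWeaklyCompact (A : Set X) : Prop :=
  ∀ x : ℕ → X, (∀ n, x n ∈ A) →
    ∃ (a : X) (φ : ℕ → ℕ), StrictMono φ ∧ WeaklyConvTo (fun k => x (φ k)) a

/-- A set is weakly precompact if every sequence in it has a weakly Cauchy subsequence. -/
def WeaklyPrecompact (A : Set X) : Prop :=
  ∀ x : ℕ → X, (∀ n, x n ∈ A) →
    ∃ φ : ℕ → ℕ, StrictMono φ ∧ WeaklyCauchySeq (fun k => x (φ k))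

/-- A weakly compact operator: the image of the closed unit ball is relatively
weakly compact. -/
def WeaklyCompactOp (T : X →L[ℝ] Y) : Prop :=
  RelWeaklyCompact (⇑T '' closedBall 0 1)

/-- A weakly precompact operator: the image of the closed unit ball is weakly
precompact. -/
def WeaklyPrecompactOp (T : X →L[ℝ] Y) : Prop :=
  WeaklyPrecompact (⇑T '' closedBall 0 1)

/-- `g n → 0` uniformly on `A`. -/
def UnifNullOn (g : ℕ → X → ℝ) (A : Set X) : Prop :=
  ∀ ε > (0 : ℝ), ∃ N, ∀ n ≥ N, ∀ a ∈ A, |g n a| ≤ ε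

/-- A weakly-`p`-Dunford-Pettis subset of `X`: bounded, and every weakly `p`-summable
sequence in `X*` tends to `0` uniformly on it. -/
def WeaklyPDP (p : ℝ≥0∞) (A : Set X) : Prop :=
  IsBounded A ∧
    ∀ f : ℕ → Dual ℝ X, WeaklyPSummable p f → UnifNullOn (fun n a => f n a) A

/-- A weakly-`p`-L-subset of `X*`: bounded, and every weakly `p`-summable sequence
in `X` tends to `0` uniformly on it. -/
def WeaklyPLSet (p : ℝ≥0∞) (A : Set (Dual ℝ X)) : Prop :=
  IsBounded A ∧
    ∀ x : ℕ → X, WeaklyPSummable p x → UnifNullOn (fun n g => g (x n)) A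

/-- A weakly-`p`-Cauchy sequence. -/
def WeaklyPCauchy (p : ℝ≥0∞) (x : ℕ → X) : Prop :=
  ∀ φ ψ : ℕ → ℕ, StrictMono φ → StrictMono ψ →
    WeaklyPSummable p fun k => x (φ k) - x (ψ k)

/-- A weakly-`p`-precompact set: every sequence in it has a weakly-`p`-Cauchy
subsequence. -/
def WeaklyPPrecompact (p : ℝ≥0∞) (A : Set X) : Prop :=
  ∀ x : ℕ → X, (∀ n, x n ∈ A) →
    ∃ φ : ℕ → ℕ, StrictMono φ ∧ WeaklyPCauchy p fun k => x (φ k)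

/-- A weakly-`p`-precompact operator. -/
def WeaklyPPrecompactOp (p : ℝ≥0∞) (T : X →L[ℝ] Y) : Prop :=
  WeaklyPPrecompact p (⇑T '' closedBall 0 1)

/-- A `w*`-null sequence of functionals. -/
def WStarNull (f : ℕ → Dual ℝ X) : Prop :=
  ∀ x : X, Tendsto (fun n => f n x) atTop (𝓝 0)

/-- A limited subset of `X`: every `w*`-null sequence in `X*` tends to `0`
uniformly on it. -/
def LimitedSet (A : Set X) : Prop :=
  ∀ f : ℕ → Dual ℝ X, WStarNull f → UnifNullOn (fun n a => f n a) A

/-- A weakly unconditionally convergent (wuc) series. -/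
def WUC (x : ℕ → X) : Prop :=
  ∀ f : Dual ℝ X, Summable fun n => |f (x n)|

/-- An unconditionally converging operator: maps wuc series to unconditionally
convergent series. -/
def UncondConverging (T : X →L[ℝ] Y) : Prop :=
  ∀ x : ℕ → X, WUC x → Summable fun n => T (x n)

/-- A `V*`-subset of `X`. -/
def VStarSet (A : Set X) : Prop :=
  IsBounded A ∧ ∀ f : ℕ → Dual ℝ X, WUC f → UnifNullOn (fun n a => f n a) A

/-- `w*`-to-`w` continuity of an operator `T : X* → Y`, in the equivalent algebraic
form: for every `g ∈ Y*` the functional `g ∘ T` on `X*` is given by evaluation at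
a point of `X`. -/
def WStarToWCont (T : Dual ℝ X →L[ℝ] Y) : Prop :=
  ∀ g : Dual ℝ Y, ∃ x : X, ∀ f : Dual ℝ X, g (T f) = f x

end Defs

section SpaceProps
variable (p : ℝ≥0∞) (X : Type*) [NormedAddCommGroup X] [NormedSpace ℝ X]

/-- The Gelfand-Phillips property: every limited subset is relatively compact. -/
def GPspace : Prop :=
  ∀ A : Set X, Bornology.IsBounded A → LimitedSet A → IsCompact (closure A)

/-- The `p`-Gelfand-Phillips property: every limited weakly `p`-summable sequence is
norm null. -/
def pGP : Prop :=
  ∀ x : ℕ → X, LimitedSet (Set.range x) → WeaklyPSummable p x → NormNull x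

/-- Property `RDP_p`: every weakly-`p`-L-subset of `X*` is relatively weakly compact. -/
def RDPp : Prop :=
  ∀ A : Set (Dual ℝ X), WeaklyPLSet p A → RelWeaklyCompact A

/-- The Schur property. -/
def SchurSpace : Prop :=
  ∀ (x : ℕ → X) (a : X), WeaklyConvTo x a → Tendsto x atTop (𝓝 a)

/-- Weak sequential completeness. -/
def WeaklySeqComplete : Prop :=
  ∀ x : ℕ → X, WeaklyCauchySeq x → ∃ a : X, WeaklyConvTo x a

/-- Pełczyński's property (V). -/
def PropertyV : Prop :=
  ∀ (Y : Type) [NormedAddCommGroup Y] [NormedSpace ℝ Y] [CompleteSpace Y],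
    ∀ T : X →L[ℝ] Y, UncondConverging T → WeaklyCompactOp T

/-- Property (V*). -/
def PropertyVStar : Prop :=
  ∀ A : Set X, VStarSet A → RelWeaklyCompact A

/-- Reflexivity of a normed space: the canonical embedding into the double dual is
surjective. -/
def ReflexiveSpace : Prop :=
  Function.Surjective (NormedSpace.inclusionInDoubleDual ℝ X)

end SpaceProps

section Embeds
/-- `Z` embeds isomorphically into `W`. -/
def EmbedsIn (Z W : Type*) [NormedAddCommGroup Z] [NormedSpace ℝ Z]
    [NormedAddCommGroup W] [NormedSpace ℝ W] : Prop :=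
  ∃ f : Z →L[ℝ] W, ∃ c > (0 : ℝ), ∀ z : Z, c * ‖z‖ ≤ ‖f z‖

end Embeds
/-- The injective tensor product `X ⊗_ε Y`, realized as the closed linear span of the
rank-one operators `x ⊗ y : x* ↦ x*(x) • y` inside the operator space `L(X*, Y)`. -/
noncomputable def injTensor (X Y : Type*) [NormedAddCommGroup X] [NormedSpace ℝ X]
    [NormedAddCommGroup Y] [NormedSpace ℝ Y] : Submodule ℝ (Dual ℝ X →L[ℝ] Y) :=
  (Submodule.span ℝ
    {T : Dual ℝ X →L[ℝ] Y | ∃ (x : X) (y : Y), ∀ f : Dual ℝ X, T f = f x • y}).topologicalClosure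


section AuxGP

variable {X Y : Type*} [NormedAddCommGroup X] [NormedSpace ℝ X]
  [NormedAddCommGroup Y] [NormedSpace ℝ Y]

/-- The generating set of rank-one operators. -/
abbrev genSet (X Y : Type*) [NormedAddCommGroup X] [NormedSpace ℝ X]
    [NormedAddCommGroup Y] [NormedSpace ℝ Y] : Set (Dual ℝ X →L[ℝ] Y) :=
  {T : Dual ℝ X →L[ℝ] Y | ∃ (x : X) (y : Y), ∀ f : Dual ℝ X, T f = f x • y}

lemma injTensor_eq (X Y : Type*) [NormedAddCommGroup X] [NormedSpace ℝ X]
    [NormedAddCommGroup Y] [NormedSpace ℝ Y] :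
    injTensor X Y = (Submodule.span ℝ (genSet X Y)).topologicalClosure := rfl

set_option maxHeartbeats 1000000 in
set_option synthInstance.maxHeartbeats 400000 in
lemma mem_closure_span (u : ↥(injTensor X Y)) :
    (u : Dual ℝ X →L[ℝ] Y) ∈ closure ((Submodule.span ℝ (genSet X Y) : Submodule ℝ _) : Set _) := by
  rw [← Submodule.topologicalClosure_coe]
  exact u.2

/-- The functional `T ↦ g (T f)` on `L(X*, Y)`. -/
noncomputable def evalFunc (f : Dual ℝ X) (g : Dual ℝ Y) :
    Dual ℝ (Dual ℝ X →L[ℝ] Y) :=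
  g.comp (ContinuousLinearMap.apply ℝ Y f)

@[simp] lemma evalFunc_apply (f : Dual ℝ X) (g : Dual ℝ Y)
    (T : Dual ℝ X →L[ℝ] Y) : evalFunc f g T = g (T f) := rfl

lemma evalFunc_norm_le (f : Dual ℝ X) (g : Dual ℝ Y) :
    ‖evalFunc f g‖ ≤ ‖g‖ * ‖f‖ := by
  refine ContinuousLinearMap.opNorm_le_bound _ (mul_nonneg (norm_nonneg _) (norm_nonneg _))
    fun T => ?_
  calc ‖evalFunc f g T‖ = ‖g (T f)‖ := rfl
    _ ≤ ‖g‖ * ‖T f‖ := g.le_opNorm _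
    _ ≤ ‖g‖ * (‖T‖ * ‖f‖) := by
        have := T.le_opNorm f
        exact mul_le_mul_of_nonneg_left this (norm_nonneg g)
    _ = ‖g‖ * ‖f‖ * ‖T‖ := by ring

/-- The functional `u ↦ g (u f)` on the injective tensor product. -/
noncomputable def evalFuncZ (f : Dual ℝ X) (g : Dual ℝ Y) :
    Dual ℝ ↥(injTensor X Y) :=
  (evalFunc f g).comp (injTensor X Y).subtypeL

@[simp] lemma evalFuncZ_apply (f : Dual ℝ X) (g : Dual ℝ Y)
    (u : ↥(injTensor X Y)) : evalFuncZ f g u = g ((u : Dual ℝ X →L[ℝ] Y) f) := rfl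

/-- Functionals bounded in norm that tend to zero on rank-one operators tend to
zero on the whole closure of their span. -/
lemma tendsto_on_closure (Φ : ℕ → Dual ℝ (Dual ℝ X →L[ℝ] Y)) (C : ℝ)
    (hC : ∀ k, ‖Φ k‖ ≤ C)
    (h0 : ∀ T ∈ genSet X Y, Tendsto (fun k => Φ k T) atTop (𝓝 0))
    {u : Dual ℝ X →L[ℝ] Y}
    (hu : u ∈ closure ((Submodule.span ℝ (genSet X Y) : Submodule ℝ _) : Set _)) :
    Tendsto (fun k => Φ k u) atTop (𝓝 0) := by
  have hC0 : 0 ≤ C := le_trans (norm_nonneg _) (hC 0)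
  have hspan : ∀ w ∈ Submodule.span ℝ (genSet X Y),
      Tendsto (fun k => Φ k w) atTop (𝓝 0) := by
    intro w hw
    induction hw using Submodule.span_induction with
    | mem T hT => exact h0 T hT
    | zero => simpa using (tendsto_const_nhds : Tendsto (fun _ : ℕ => (0:ℝ)) atTop (𝓝 0))
    | add a b _ _ ha hb => simpa using ha.add hb
    | smul c a _ ha => simpa using ha.const_mul c
  rw [Metric.tendsto_atTop]
  intro ε hε
  obtain ⟨w, hwmem, hwu⟩ : ∃ w ∈ ((Submodule.span ℝ (genSet X Y) : Submodule ℝ _) : Set _),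
      dist u w < ε / (2 * (C + 1)) := by
    have := Metric.mem_closure_iff.mp hu (ε / (2 * (C + 1))) (by positivity)
    obtain ⟨w, hw, hd⟩ := this
    exact ⟨w, hw, hd⟩
  obtain ⟨N, hN⟩ := Metric.tendsto_atTop.mp (hspan w hwmem) (ε / 2) (by positivity)
  refine ⟨N, fun k hk => ?_⟩
  have h1 : ‖Φ k u - Φ k w‖ ≤ C * ‖u - w‖ := by
    rw [← map_sub]
    calc ‖Φ k (u - w)‖ ≤ ‖Φ k‖ * ‖u - w‖ := (Φ k).le_opNorm _
      _ ≤ C * ‖u - w‖ := mul_le_mul_of_nonneg_right (hC k) (norm_nonneg _)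
  have h2 : dist (Φ k w) 0 < ε / 2 := hN k hk
  have hd : ‖u - w‖ < ε / (2 * (C + 1)) := by rwa [dist_eq_norm] at hwu
  have h3 : C * ‖u - w‖ ≤ ε / 2 := by
    calc C * ‖u - w‖ ≤ C * (ε / (2 * (C + 1))) :=
          mul_le_mul_of_nonneg_left hd.le hC0
      _ ≤ ε / 2 := by
          have hpos : (0:ℝ) < 2 * (C + 1) := by linarith
          have ht0 : 0 ≤ ε / (2 * (C + 1)) := by positivity
          have h5 : ε / (2 * (C + 1)) * (2 * (C + 1)) = ε := div_mul_cancel₀ _ (ne_of_gt hpos)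
          nlinarith [ht0, h5, hC0]
  rw [Real.dist_eq, sub_zero]
  calc |Φ k u| ≤ |Φ k u - Φ k w| + |Φ k w| := by
        have := abs_sub_abs_le_abs_sub (Φ k u) (Φ k w)
        have h5 := abs_add_le (Φ k u - Φ k w) (Φ k w)
        simpa using h5.trans_eq' (by ring_nf)
    _ ≤ C * ‖u - w‖ + |Φ k w| := by
        exact add_le_add_left h1 _
    _ < ε / 2 + ε / 2 := by
        have : |Φ k w| < ε / 2 := by rwa [Real.dist_eq, sub_zero] at h2
        exact add_lt_add_of_le_of_lt h3 this
    _ = ε := by ring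

set_option maxHeartbeats 1000000 in
set_option synthInstance.maxHeartbeats 400000 in
/-- W*-nullness of the sequence `u ↦ g k (u (f k))` under natural hypotheses. -/
lemma wStarNull_evalFuncZ (f : ℕ → Dual ℝ X) (g : ℕ → Dual ℝ Y) (C : ℝ)
    (hC : ∀ k, ‖g k‖ * ‖f k‖ ≤ C)
    (h0 : ∀ (x : X) (y : Y), Tendsto (fun k => f k x * g k y) atTop (𝓝 0)) :
    WStarNull (X := ↥(injTensor X Y)) (fun k => evalFuncZ (f k) (g k)) := by
  intro u
  have key : Tendsto (fun k => evalFunc (f k) (g k) (u : Dual ℝ X →L[ℝ] Y)) atTop (𝓝 0) := by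
    refine tendsto_on_closure _ C (fun k => le_trans (evalFunc_norm_le _ _) (hC k)) ?_
      (mem_closure_span u)
    rintro T ⟨x, y, hT⟩
    have : ∀ k, evalFunc (f k) (g k) T = f k x * g k y := by
      intro k
      rw [evalFunc_apply, hT, map_smul, smul_eq_mul]
    simpa [this] using h0 x y
  exact key

set_option maxHeartbeats 1000000 in
set_option synthInstance.maxHeartbeats 400000 in
/-- Every element of the injective tensor product is `w*`-to-`w` continuous:
the composition with a functional on `Y` is represented by an element of `X`. -/
lemma exists_repr [CompleteSpace X] (u : ↥(injTensor X Y)) (g : Dual ℝ Y) :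
    ∃ x : X, ∀ f : Dual ℝ X, g ((u : Dual ℝ X →L[ℝ] Y) f) = f x := by
  have hspan : ∀ w ∈ Submodule.span ℝ (genSet X Y),
      ∃ x : X, ∀ f : Dual ℝ X, g (w f) = f x := by
    intro w hw
    induction hw using Submodule.span_induction with
    | mem T hT =>
        obtain ⟨x, y, hT⟩ := hT
        refine ⟨g y • x, fun f => ?_⟩
        rw [hT, map_smul, smul_eq_mul, map_smul, smul_eq_mul, mul_comm]
    | zero => exact ⟨0, fun f => by simp⟩
    | add a b _ _ ha hb =>
        obtain ⟨x₁, hx₁⟩ := ha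
        obtain ⟨x₂, hx₂⟩ := hb
        exact ⟨x₁ + x₂, fun f => by
          simp [ContinuousLinearMap.add_apply, map_add, hx₁ f, hx₂ f]⟩
    | smul c a _ ha =>
        obtain ⟨x₁, hx₁⟩ := ha
        exact ⟨c • x₁, fun f => by
          simp [ContinuousLinearMap.smul_apply, map_smul, hx₁ f]⟩
  obtain ⟨v, hvmem, hvlim⟩ := mem_closure_iff_seq_limit.mp (mem_closure_span u)
  choose x hx using fun k => hspan (v k) (hvmem k)
  have hdiff : ∀ k l, ‖x k - x l‖ ≤ ‖g‖ * ‖v k - v l‖ := by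
    intro k l
    refine norm_le_dual_bound ℝ _ (mul_nonneg (norm_nonneg _) (norm_nonneg _)) fun f => ?_
    have : f (x k - x l) = g ((v k - v l) f) := by
      rw [map_sub, ← hx k f, ← hx l f, ContinuousLinearMap.sub_apply, map_sub]
    rw [this]
    calc ‖g ((v k - v l) f)‖ ≤ ‖g‖ * ‖(v k - v l) f‖ := g.le_opNorm _
      _ ≤ ‖g‖ * (‖v k - v l‖ * ‖f‖) :=
          mul_le_mul_of_nonneg_left ((v k - v l).le_opNorm f) (norm_nonneg _)
      _ = ‖g‖ * ‖v k - v l‖ * ‖f‖ := by ring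
  have hcauchy : CauchySeq x := by
    rw [Metric.cauchySeq_iff]
    intro ε hε
    obtain ⟨N, hN⟩ := Metric.cauchySeq_iff.mp hvlim.cauchySeq (ε / (‖g‖ + 1))
      (by positivity)
    refine ⟨N, fun k hk l hl => ?_⟩
    have h1 := hdiff k l
    have h2 : dist (v k) (v l) < ε / (‖g‖ + 1) := hN k hk l hl
    rw [dist_eq_norm] at h2 ⊢
    calc ‖x k - x l‖ ≤ ‖g‖ * ‖v k - v l‖ := h1
      _ ≤ (‖g‖ + 1) * ‖v k - v l‖ :=
          mul_le_mul_of_nonneg_right (by linarith) (norm_nonneg _)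
      _ < (‖g‖ + 1) * (ε / (‖g‖ + 1)) := by
          apply mul_lt_mul_of_pos_left h2 (by positivity)
      _ = ε := by field_simp
  obtain ⟨xlim, hxlim⟩ := cauchySeq_tendsto_of_complete hcauchy
  refine ⟨xlim, fun f => ?_⟩
  have h1 : Tendsto (fun k => f (x k)) atTop (𝓝 (f xlim)) :=
    (f.continuous.tendsto xlim).comp hxlim
  have h2 : Tendsto (fun k => g (v k f)) atTop (𝓝 (g ((u : Dual ℝ X →L[ℝ] Y) f))) := by
    have := ((ContinuousLinearMap.apply ℝ Y f).continuous.tendsto _).comp hvlim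
    exact (g.continuous.tendsto _).comp this
  have heq : (fun k => f (x k)) = fun k => g (v k f) := funext fun k => (hx k f).symm
  rw [heq] at h1
  exact tendsto_nhds_unique h2 h1

/-- Pointwise null sequences of operators are uniformly bounded (Banach–Steinhaus). -/
lemma wstar_bound {E F : Type*} [NormedAddCommGroup E] [NormedSpace ℝ E]
    [CompleteSpace E] [NormedAddCommGroup F] [NormedSpace ℝ F]
    (f : ℕ → E →L[ℝ] F) (h : ∀ x, Tendsto (fun k => f k x) atTop (𝓝 0)) :
    ∃ C : ℝ, 0 ≤ C ∧ ∀ k, ‖f k‖ ≤ C := by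
  have hpt : ∀ x, ∃ C : ℝ, ∀ k, ‖f k x‖ ≤ C := by
    intro x
    have h2 := (h x).norm
    rw [norm_zero] at h2
    obtain ⟨C, hC⟩ := h2.bddAbove_range
    exact ⟨C, fun i => hC ⟨i, rfl⟩⟩
  obtain ⟨C, hC⟩ := banach_steinhaus hpt
  exact ⟨max C 0, le_max_right _ _, fun k => (hC k).trans (le_max_left _ _)⟩

lemma memℓp_bound {a : ℕ → ℝ} {p : ℝ≥0∞} (h : Memℓp a p) :
    ∃ C : ℝ, ∀ n, |a n| ≤ C := by
  obtain ⟨C, hC⟩ := memℓp_infty_iff.mp (h.of_exponent_ge le_top)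
  exact ⟨C, fun n => by simpa [Real.norm_eq_abs] using hC ⟨n, rfl⟩⟩

end AuxGP

set_option synthInstance.maxHeartbeats 1000000 in
set_option maxHeartbeats 2000000 in
/-- For `1 ≤ p < ∞`, if `X` has the `p`-Gelfand-Phillips property and
`Y` has the Gelfand-Phillips property, then `X ⊗_ε Y` has the `p`-Gelfand-Phillips
property. -/
theorem stmt_17 {X Y : Type*} [NormedAddCommGroup X] [NormedSpace ℝ X] [CompleteSpace X]
    [NormedAddCommGroup Y] [NormedSpace ℝ Y] [CompleteSpace Y]
    (p : ℝ≥0∞) (hp : 1 ≤ p) (hp' : p ≠ ⊤)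
    (hX : pGP p X) (hY : GPspace Y) :
    pGP p ↥(injTensor X Y) := by
  intro u hLim hSum
  by_contra hnot
  rw [NormNull, Metric.tendsto_atTop] at hnot
  push_neg at hnot
  obtain ⟨ε, hε, hfreq⟩ := hnot
  obtain ⟨φ, hφmono, hφ⟩ := extraction_of_frequently_atTop (frequently_atTop.mpr hfreq)
  have hφ' : ∀ j, ε ≤ ‖(u (φ j) : Dual ℝ X →L[ℝ] Y)‖ := by
    intro j
    have := hφ j
    rwa [Real.dist_eq, sub_zero, abs_of_nonneg (norm_nonneg _)] at this
  -- choose witnesses f j in the unit ball with ε/2 < ‖u (φ j) (f j)‖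
  have hfex : ∀ j, ∃ f : Dual ℝ X, ‖f‖ ≤ 1 ∧
      ε / 2 < ‖(u (φ j) : Dual ℝ X →L[ℝ] Y) f‖ := by
    intro j
    obtain ⟨f, hf1, hf2⟩ := ContinuousLinearMap.exists_lt_apply_of_lt_opNorm
      (u (φ j) : Dual ℝ X →L[ℝ] Y) (lt_of_lt_of_le (show ε / 2 < ε by linarith) (hφ' j))
    exact ⟨f, hf1.le, hf2⟩
  choose f hf1 hf2 using hfex
  set y : ℕ → Y := fun j => (u (φ j) : Dual ℝ X →L[ℝ] Y) (f j) with hydef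
  -- the sequence u is bounded (Banach–Steinhaus from weak p-summability)
  obtain ⟨C, hC0, hC⟩ : ∃ C : ℝ, 0 ≤ C ∧ ∀ n, ‖u n‖ ≤ C := by
    have hpt : ∀ Φ : Dual ℝ ↥(injTensor X Y), ∃ C : ℝ, ∀ n,
        ‖(inclusionInDoubleDual ℝ ↥(injTensor X Y) (u n)) Φ‖ ≤ C := by
      intro Φ
      obtain ⟨C, hC⟩ := memℓp_bound (hSum Φ)
      exact ⟨C, fun n => by simpa [Real.norm_eq_abs] using hC n⟩
    obtain ⟨C, hC⟩ := banach_steinhaus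
      (g := fun n => inclusionInDoubleDual ℝ ↥(injTensor X Y) (u n)) (fun Φ => hpt Φ)
    refine ⟨max C 0, le_max_right _ _, fun n => ?_⟩
    refine norm_le_dual_bound ℝ _ (le_max_right _ _) fun Φ => ?_
    calc ‖Φ (u n)‖ = ‖(inclusionInDoubleDual ℝ ↥(injTensor X Y) (u n)) Φ‖ := rfl
      _ ≤ ‖inclusionInDoubleDual ℝ ↥(injTensor X Y) (u n)‖ * ‖Φ‖ :=
          ContinuousLinearMap.le_opNorm _ _
      _ ≤ max C 0 * ‖Φ‖ :=
          mul_le_mul_of_nonneg_right ((hC n).trans (le_max_left _ _)) (norm_nonneg _)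
  have hCval : ∀ n, ‖(u n : Dual ℝ X →L[ℝ] Y)‖ ≤ C := fun n => hC n
  -- range y is bounded
  have hyb : IsBounded (Set.range y) := by
    rw [isBounded_iff_forall_norm_le]
    refine ⟨C, ?_⟩
    rintro _ ⟨j, rfl⟩
    calc ‖y j‖ ≤ ‖(u (φ j) : Dual ℝ X →L[ℝ] Y)‖ * ‖f j‖ :=
          ContinuousLinearMap.le_opNorm _ _
      _ ≤ C * 1 := mul_le_mul (hCval _) (hf1 j) (norm_nonneg _) hC0
      _ = C := mul_one C
  -- range y is limited in Y
  have hyl : LimitedSet (Set.range y) := by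
    intro g hg
    intro δ hδ
    by_contra hcon
    push_neg at hcon
    have hfreq2 : ∀ N, ∃ k ≥ N, ∃ j, δ < |g k (y j)| := by
      intro N
      obtain ⟨k, hk, a, ⟨j, rfl⟩, ha2⟩ := hcon N
      exact ⟨k, hk, j, ha2⟩
    obtain ⟨κ, hκmono, hκ⟩ := extraction_of_frequently_atTop (frequently_atTop.mpr hfreq2)
    choose j hj using hκ
    -- bound for g
    obtain ⟨D, hD0, hD⟩ := wstar_bound g hg
    have hΨ : WStarNull (X := ↥(injTensor X Y)) (fun m => evalFuncZ (f (j m)) (g (κ m))) := by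
      refine wStarNull_evalFuncZ _ _ D (fun m => ?_) (fun x' y' => ?_)
      · calc ‖g (κ m)‖ * ‖f (j m)‖ ≤ D * 1 :=
            mul_le_mul (hD _) (hf1 _) (norm_nonneg _) hD0
          _ = D := mul_one D
      · refine squeeze_zero_norm (a := fun m => ‖x'‖ * ‖g (κ m) y'‖) (fun m => ?_) ?_
        · calc ‖f (j m) x' * g (κ m) y'‖ = ‖f (j m) x'‖ * ‖g (κ m) y'‖ :=
              norm_mul _ _
            _ ≤ (‖f (j m)‖ * ‖x'‖) * ‖g (κ m) y'‖ :=
              mul_le_mul_of_nonneg_right ((f (j m)).le_opNorm x') (norm_nonneg _)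
            _ ≤ (1 * ‖x'‖) * ‖g (κ m) y'‖ := by
              have := mul_le_mul_of_nonneg_right
                (mul_le_mul_of_nonneg_right (hf1 (j m)) (norm_nonneg x')) (norm_nonneg (g (κ m) y'))
              exact this
            _ = ‖x'‖ * ‖g (κ m) y'‖ := by rw [one_mul]
        · have h1 : Tendsto (fun m => g (κ m) y') atTop (𝓝 0) :=
            (hg y').comp hκmono.tendsto_atTop
          simpa using h1.norm.const_mul ‖x'‖
    obtain ⟨N, hN⟩ := hLim _ hΨ δ hδ
    have hcontra : |evalFuncZ (f (j N)) (g (κ N)) (u (φ (j N)))| ≤ δ :=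
      hN N le_rfl (u (φ (j N))) ⟨φ (j N), rfl⟩
    have heq2 : evalFuncZ (f (j N)) (g (κ N)) (u (φ (j N))) = g (κ N) (y (j N)) := rfl
    rw [heq2] at hcontra
    exact absurd (hj N) (not_lt.mpr hcontra)
  -- GP of Y: relative compactness, extract a convergent subsequence of y
  have hcpt := hY _ hyb hyl
  obtain ⟨ylim, _, ψ, hψmono, hψ⟩ :=
    hcpt.tendsto_subseq (x := y) (fun j => subset_closure ⟨j, rfl⟩)
  have hylimnorm : ε / 2 ≤ ‖ylim‖ := by
    refine ge_of_tendsto hψ.norm (Eventually.of_forall fun k => ?_)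
    exact (hf2 (ψ k)).le
  have hylimne : ylim ≠ 0 := by
    intro h
    rw [h, norm_zero] at hylimnorm
    linarith
  obtain ⟨g, hgnorm, hgy⟩ := exists_dual_vector ℝ ylim (norm_ne_zero_iff.mpr hylimne)
  -- representatives x n ∈ X of g ∘ u n
  have hxex : ∀ n, ∃ x : X, ∀ f' : Dual ℝ X, g ((u n : Dual ℝ X →L[ℝ] Y) f') = f' x :=
    fun n => exists_repr (u n) g
  choose x hxdef using hxex
  -- x is weakly p-summable
  have hxsum : WeaklyPSummable p x := by
    intro F
    have heq : (fun n => F (x n)) = fun n => evalFuncZ F g (u n) :=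
      funext fun n => (hxdef n F).symm
    rw [heq]
    exact hSum _
  -- x is limited
  have hxlim : LimitedSet (Set.range x) := by
    intro f' hf'
    obtain ⟨D, hD0, hD⟩ := wstar_bound f' hf'
    have hΨ : WStarNull (X := ↥(injTensor X Y)) (fun k => evalFuncZ (f' k) g) := by
      refine wStarNull_evalFuncZ _ _ (‖g‖ * D) (fun k => ?_) (fun x' y' => ?_)
      · exact mul_le_mul_of_nonneg_left (hD k) (norm_nonneg g)
      · have h1 : Tendsto (fun k => f' k x') atTop (𝓝 0) := hf' x'
        simpa using h1.mul_const (g y')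
    intro δ hδ
    obtain ⟨N, hN⟩ := hLim _ hΨ δ hδ
    refine ⟨N, fun k hk a ha => ?_⟩
    obtain ⟨n, rfl⟩ := ha
    have h6 : |evalFuncZ (f' k) g (u n)| ≤ δ := hN k hk (u n) ⟨n, rfl⟩
    have heq : evalFuncZ (f' k) g (u n) = f' k (x n) := by
      rw [evalFuncZ_apply, hxdef n (f' k)]
    rwa [heq] at h6
  -- pGP of X: x is norm null
  have hxnull := hX x hxlim hxsum
  -- contradiction
  have h1 : Tendsto (fun k => g (y (ψ k))) atTop (𝓝 (g ylim)) :=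
    (g.continuous.tendsto ylim).comp hψ
  have h2 : Tendsto (fun k => g (y (ψ k))) atTop (𝓝 0) := by
    have heq : ∀ k, g (y (ψ k)) = f (ψ k) (x (φ (ψ k))) := fun k =>
      hxdef (φ (ψ k)) (f (ψ k))
    refine squeeze_zero_norm (a := fun k => ‖x (φ (ψ k))‖) (fun k => ?_) ?_
    · rw [heq k]
      calc ‖f (ψ k) (x (φ (ψ k)))‖ ≤ ‖f (ψ k)‖ * ‖x (φ (ψ k))‖ :=
          ContinuousLinearMap.le_opNorm _ _
        _ ≤ 1 * ‖x (φ (ψ k))‖ :=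
          mul_le_mul_of_nonneg_right (hf1 _) (norm_nonneg _)
        _ = ‖x (φ (ψ k))‖ := one_mul _
    · exact hxnull.comp (hφmono.comp hψmono).tendsto_atTop
  have hzero : g ylim = 0 := tendsto_nhds_unique h1 h2
  rw [hgy] at hzero
  have : ‖ylim‖ = 0 := by exact_mod_cast hzero
  rw [this] at hylimnorm
  linarith
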